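/- The (i,j)-th N_r × N_t block of the virtual channel matrix equals the sub-carrier channel matrix of index i+j-2: H_v^{(i,j)} = H^{(i+j-2)} for all 1 ≤ i,j ≤ (N_s+1)/2, where H^{(n)} = ∑_{k=0}^{K} γ_k e^{-j2πnτ_k/(N_s T_s)} α(θ_{Rx,k}) β(θ_{Tx,k})ᴴ. -/

import Mathlib

open Matrix

theorem virtual_channel_block_eq_subcarrier {Ns Nr Nt K M : ℕ}
    (hM : 2 * M = Ns + 1) (Ts : ℝ) (hTs : 0 < Ts)
    (γ : Fin (K + 1) → ℂ) (τ θRx θTx : Fin (K + 1) → ℝ)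
    (α : ℝ → Fin Nr → ℂ) (β : ℝ → Fin Nt → ℂ)
    (ξ : ℝ → Fin M → ℂ)
    (hξ : ∀ t (m : Fin M),
      ξ t m = (1 / Real.sqrt M : ℂ) * Complex.exp ((-(2 * Real.pi * m * t / (Ns * Ts)) : ℝ) * Complex.I))
    (Hv : Matrix (Fin M × Fin Nr) (Fin M × Fin Nt) ℂ)
    (hHv : Hv = ∑ k, ((M : ℂ) * γ k) • Matrix.vecMulVec
        (fun p => ξ (τ k) p.1 * α (θRx k) p.2)
        (star ∘ fun p => ξ (-τ k) p.1 * β (θTx k) p.2))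
    (Hsub : ℕ → Matrix (Fin Nr) (Fin Nt) ℂ)
    (hHsub : ∀ n, Hsub n = ∑ k, γ k • Matrix.vecMulVec
        (fun r => Complex.exp ((-(2 * Real.pi * n * τ k / (Ns * Ts)) : ℝ) * Complex.I) * α (θRx k) r)
        (star ∘ fun t => β (θTx k) t)) :
    ∀ (i j : Fin M) (r : Fin Nr) (t : Fin Nt),
      Hv (i, r) (j, t) = Hsub ((i : ℕ) + (j : ℕ)) r t := by
  intro i j r t
  have hMpos : 0 < M := by omega
  subst hHv
  rw [hHsub]
  simp only [Matrix.sum_apply, Matrix.smul_apply, Matrix.vecMulVec_apply, Function.comp,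
    smul_eq_mul]
  refine Finset.sum_congr rfl fun k _ => ?_
  rw [hξ, hξ]
  have hs : (Real.sqrt M : ℂ) * Real.sqrt M = (M : ℂ) := by
    exact_mod_cast congrArg (Complex.ofReal) (Real.mul_self_sqrt (Nat.cast_nonneg M))
  have hs0 : (Real.sqrt M : ℂ) ≠ 0 := by
    have h : (0:ℝ) < Real.sqrt M := Real.sqrt_pos.mpr (by exact_mod_cast hMpos)
    exact_mod_cast h.ne'
  simp only [star_mul', Complex.star_def, _root_.map_mul, map_div₀, _root_.map_one, map_neg,
    Complex.conj_ofReal, Complex.conj_I, Complex.ofReal_neg, Complex.ofReal_div,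
    Complex.ofReal_mul, Complex.ofReal_natCast, Complex.ofReal_ofNat, mul_neg, neg_neg, neg_mul]
  rw [← Complex.exp_conj]
  simp only [map_neg, _root_.map_mul, map_div₀, Complex.conj_I, Complex.conj_ofReal, map_natCast, map_ofNat, neg_div, neg_mul, mul_neg,
    neg_neg]
  push_cast
  have hE : Complex.exp (-(2 * (Real.pi:ℂ) * ((i:ℕ):ℂ) * ((τ k : ℝ):ℂ) / ((Ns:ℂ) * (Ts:ℂ)) * Complex.I)) *
      Complex.exp (-(2 * (Real.pi:ℂ) * ((j:ℕ):ℂ) * ((τ k : ℝ):ℂ) / ((Ns:ℂ) * (Ts:ℂ)) * Complex.I)) =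
      Complex.exp (-(2 * (Real.pi:ℂ) * (((i:ℕ):ℂ) + ((j:ℕ):ℂ)) * ((τ k : ℝ):ℂ) / ((Ns:ℂ) * (Ts:ℂ)) * Complex.I)) := by
    rw [← Complex.exp_add]; congr 1; ring
  have h1 : (M:ℂ) * (1/((Real.sqrt M : ℝ):ℂ)) * (1/((Real.sqrt M : ℝ):ℂ)) = 1 := by
    field_simp
    rw [sq]; exact hs.symm
  linear_combination (γ k * α (θRx k) r * (starRingEnd ℂ) (β (θTx k) t) * (M:ℂ) /
      (((Real.sqrt M : ℝ):ℂ) * ((Real.sqrt M : ℝ):ℂ))) * hE +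
    (γ k * α (θRx k) r * (starRingEnd ℂ) (β (θTx k) t) *
      Complex.exp (-(2 * (Real.pi:ℂ) * (((i:ℕ):ℂ) + ((j:ℕ):ℂ)) * ((τ k : ℝ):ℂ) / ((Ns:ℂ) * (Ts:ℂ)) * Complex.I))) * h1
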